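/- The map g(z) := z + (1 + e^{2z})/2 is a conformal bijection of the strip S = {z : |Im z| < π/2} onto the two-slit domain D* = ℂ \ {w : Re w ≤ 0 and |Im w| = π/2}. -/

import Mathlib

open Real

noncomputable def gm (z : ℂ) : ℂ := z + (1 + Complex.exp (2 * z)) / 2

lemma gm_diff : Differentiable ℂ gm := by
  unfold gm; fun_prop

lemma gm_re (z : ℂ) : (gm z).re = z.re + (1 + Real.exp (2*z.re) * Real.cos (2*z.im))/2 := by
  simp [gm, Complex.add_re, Complex.div_re, Complex.exp_re, Complex.normSq]

lemma gm_im (z : ℂ) : (gm z).im = z.im + Real.exp (2*z.re) * Real.sin (2*z.im)/2 := by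
  simp [gm, Complex.add_im, Complex.div_im, Complex.exp_im, Complex.normSq]

lemma sin_gt_mul_cos {r : ℝ} (h0 : 0 < r) (h1 : r < π) : r * Real.cos r < Real.sin r := by
  rcases lt_or_ge r (π/2) with h | h
  · have ht := Real.lt_tan h0 h
    have hc : 0 < Real.cos r := Real.cos_pos_of_mem_Ioo ⟨by linarith [Real.pi_pos], h⟩
    rw [Real.tan_eq_sin_div_cos, lt_div_iff₀ hc] at ht
    linarith
  · have hc : Real.cos r ≤ 0 := Real.cos_nonpos_of_pi_div_two_le_of_le h (by linarith [Real.pi_pos])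
    have hs : 0 < Real.sin r := Real.sin_pos_of_pos_of_lt_pi h0 h1
    nlinarith

lemma key {z : ℂ} (h0 : 0 < z.im) (h1 : z.im < π/2) (hi : (gm z).im = π/2) : 0 < (gm z).re := by
  rw [gm_im] at hi
  rw [gm_re]
  set x := z.re; set y := z.im
  set r : ℝ := π - 2*y with hr
  have hr0 : 0 < r := by simp only [hr]; linarith
  have hr1 : r < π := by simp only [hr]; linarith
  have h2y : 2*y = π - r := by rw [hr]; ring
  have hsin : Real.sin (2*y) = Real.sin r := by rw [h2y, Real.sin_pi_sub]
  have hcos : Real.cos (2*y) = -Real.cos r := by rw [h2y, Real.cos_pi_sub]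
  have hsr : 0 < Real.sin r := Real.sin_pos_of_pos_of_lt_pi hr0 hr1
  have hE : Real.exp (2*x) * Real.sin r = r := by rw [← hsin]; linarith
  have hEe : Real.exp (2*x) = r / Real.sin r := by rw [eq_div_iff (ne_of_gt hsr)]; exact hE
  have h2x : 2*x = Real.log r - Real.log (Real.sin r) := by
    have := Real.log_exp (2*x)
    rw [hEe, Real.log_div (ne_of_gt hr0) (ne_of_gt hsr)] at this
    linarith
  have hlog : Real.log (Real.sin r) < Real.log r := Real.log_lt_log hsr (Real.sin_lt hr0)
  have hcot : r * Real.cos r / Real.sin r < 1 := (div_lt_one hsr).2 (sin_gt_mul_cos hr0 hr1)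
  have hterm : Real.exp (2*x) * Real.cos (2*y) = -(r * Real.cos r / Real.sin r) := by
    rw [hEe, hcos]; field_simp
  rw [hterm]
  linarith
lemma gm_conj (z : ℂ) : gm (starRingEnd ℂ z) = starRingEnd ℂ (gm z) := by
  simp [gm, ← Complex.exp_conj, map_add, map_mul, map_div₀, map_one, map_ofNat]

lemma gm_maps {z : ℂ} (hz : |z.im| < π/2) : ¬((gm z).re ≤ 0 ∧ |(gm z).im| = π/2) := by
  have hpi := Real.pi_pos
  obtain ⟨hz1, hz2⟩ := abs_lt.1 hz
  rintro ⟨hre, him⟩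
  rcases lt_trichotomy z.im 0 with hy | hy | hy
  · have hs : Real.sin (2*z.im) < 0 := by
      have := Real.sin_pos_of_pos_of_lt_pi (x := -(2*z.im)) (by linarith) (by linarith)
      rw [Real.sin_neg] at this; linarith
    have himlt : (gm z).im < 0 := by
      rw [gm_im]; nlinarith [Real.exp_pos (2*z.re)]
    have him' : (gm z).im = -(π/2) := by
      rcases abs_eq (by positivity : (0:ℝ) ≤ π/2) |>.1 him with h | h
      · linarith
      · exact h
    have h0 : 0 < (starRingEnd ℂ z).im := by simp [Complex.conj_im]; linarith
    have h1 : (starRingEnd ℂ z).im < π/2 := by simp [Complex.conj_im]; linarith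
    have hi : (gm (starRingEnd ℂ z)).im = π/2 := by
      rw [gm_conj]; simp [Complex.conj_im, him']
    have := key h0 h1 hi
    rw [gm_conj] at this; simp [Complex.conj_re] at this
    linarith
  · have : (gm z).im = 0 := by rw [gm_im, hy]; simp
    rw [this] at him; simp at him; linarith
  · have hs : 0 < Real.sin (2*z.im) :=
      Real.sin_pos_of_pos_of_lt_pi (by linarith) (by linarith)
    have himgt : 0 < (gm z).im := by
      rw [gm_im]; nlinarith [Real.exp_pos (2*z.re)]
    have him' : (gm z).im = π/2 := by
      rcases abs_eq (by positivity : (0:ℝ) ≤ π/2) |>.1 him with h | h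
      · exact h
      · linarith
    linarith [key hy hz2 him']
noncomputable def fm (ζ : ℂ) : ℂ := Complex.log ζ + (1 + ζ^2)/2

lemma fm_exp {z : ℂ} (hz : |z.im| < π/2) : fm (Complex.exp z) = gm z := by
  obtain ⟨h1, h2⟩ := abs_lt.1 hz
  have hpi := Real.pi_pos
  unfold fm gm
  rw [Complex.log_exp (by linarith) (by linarith)]
  congr 2
  rw [two_mul, Complex.exp_add, sq]

lemma fm_hasDeriv {ζ : ℂ} (h : 0 < ζ.re) : HasDerivAt fm (ζ⁻¹ + ζ) ζ := by
  have h1 : HasDerivAt Complex.log ζ⁻¹ ζ := Complex.hasDerivAt_log (Or.inl h)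
  have h2 : HasDerivAt (fun ζ : ℂ => (1 + ζ^2)/2) ζ ζ := by
    have := ((hasDerivAt_pow 2 ζ).const_add 1).div_const 2
    refine this.congr_deriv ?_
    simp
  exact h1.add h2

lemma fm_deriv_re_pos {ζ : ℂ} (h : 0 < ζ.re) : 0 < (ζ⁻¹ + ζ).re := by
  have hζ : ζ ≠ 0 := fun h0 => by simp [h0] at h
  have hn : 0 < Complex.normSq ζ := Complex.normSq_pos.2 hζ
  rw [Complex.add_re, Complex.inv_re]
  positivity

lemma fm_injOn : Set.InjOn fm {ζ : ℂ | 0 < ζ.re} := by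
  intro ζ1 hζ1 ζ2 hζ2 heq
  by_contra hne
  set d : ℂ := ζ2 - ζ1 with hd
  have hd0 : d ≠ 0 := sub_ne_zero.2 (Ne.symm hne)
  set c : ℝ → ℂ := fun t => ζ1 + t * d with hc
  have hcre : ∀ t ∈ Set.Icc (0:ℝ) 1, 0 < (c t).re := by
    intro t ht
    have : (c t).re = ζ1.re + t * (ζ2.re - ζ1.re) := by
      simp [hc, hd, Complex.add_re, Complex.mul_re, Complex.sub_re, Complex.sub_im]
    rw [this]
    rcases ht with ⟨ht0, ht1⟩
    have a1 : 0 < ζ1.re := hζ1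
    have a2 : 0 < ζ2.re := hζ2
    have hm : 0 < min ζ1.re ζ2.re := lt_min a1 a2
    nlinarith [mul_nonneg (by linarith : (0:ℝ) ≤ 1 - t) (by linarith [min_le_left ζ1.re ζ2.re] : (0:ℝ) ≤ ζ1.re - min ζ1.re ζ2.re), mul_nonneg ht0 (by linarith [min_le_right ζ1.re ζ2.re] : (0:ℝ) ≤ ζ2.re - min ζ1.re ζ2.re)]
  set φ : ℝ → ℝ := fun t => (starRingEnd ℂ d * fm (c t)).re with hφdef
  have hφ : ∀ t ∈ Set.Icc (0:ℝ) 1, HasDerivAt φ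
      (Complex.normSq d * ((c t)⁻¹ + c t).re) t := by
    intro t ht
    have hinner : HasDerivAt (fun w : ℂ => ζ1 + w * d) d (t : ℂ) := by
      simpa using ((hasDerivAt_id (t:ℂ)).mul_const d).const_add ζ1
    have hf : HasDerivAt fm ((c t)⁻¹ + c t) (ζ1 + (t:ℂ) * d) := fm_hasDeriv (hcre t ht)
    have hcomp : HasDerivAt (fun w : ℂ => starRingEnd ℂ d * fm (ζ1 + w * d))
        (starRingEnd ℂ d * (((c t)⁻¹ + c t) * d)) (t : ℂ) :=
      ((hf.comp (t:ℂ) hinner)).const_mul _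
    have := hcomp.real_of_complex
    convert this using 1
    have : starRingEnd ℂ d * (((c t)⁻¹ + c t) * d)
        = (Complex.normSq d : ℝ) * ((c t)⁻¹ + c t) := by
      rw [Complex.normSq_eq_conj_mul_self]
      ring
    rw [this, Complex.re_ofReal_mul]
  have hmono : StrictMonoOn φ (Set.Icc 0 1) := by
    apply strictMonoOn_of_deriv_pos (convex_Icc 0 1)
    · intro t ht
      exact (hφ t ht).continuousAt.continuousWithinAt
    · intro t ht
      rw [interior_Icc] at ht
      rw [(hφ t (Set.mem_Icc_of_Ioo ht)).deriv]
      have := fm_deriv_re_pos (hcre t (Set.mem_Icc_of_Ioo ht))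
      have hn : 0 < Complex.normSq d := Complex.normSq_pos.2 hd0
      positivity
  have h01 : φ 0 < φ 1 := hmono (Set.left_mem_Icc.2 zero_le_one)
    (Set.right_mem_Icc.2 zero_le_one) zero_lt_one
  have he0 : c 0 = ζ1 := by simp [hc]
  have he1 : c 1 = ζ2 := by simp [hc, hd]
  rw [hφdef] at h01
  simp only [he0, he1, heq] at h01
  exact lt_irrefl _ h01

lemma exp_injOn_strip {z1 z2 : ℂ} (h1 : |z1.im| < π/2) (h2 : |z2.im| < π/2)
    (h : Complex.exp z1 = Complex.exp z2) : z1 = z2 := by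
  obtain ⟨n, hn⟩ := Complex.exp_eq_exp_iff_exists_int.1 h
  have him : z1.im = z2.im + n * (2 * π) := by
    have := congrArg Complex.im hn
    simpa using this
  have hpi := Real.pi_pos
  obtain ⟨ha, hb⟩ := abs_lt.1 h1
  obtain ⟨hc, hd⟩ := abs_lt.1 h2
  have hn0 : n = 0 := by
    rcases lt_trichotomy n 0 with h' | h' | h'
    · have hn1 : n ≤ -1 := by omega
      have : (n:ℝ) ≤ -1 := by exact_mod_cast hn1
      nlinarith
    · exact h'
    · have hn1 : (1:ℤ) ≤ n := h'
      have : (1:ℝ) ≤ n := by exact_mod_cast hn1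
      nlinarith
  rw [hn0] at hn; simpa using hn

lemma gm_injOn : Set.InjOn gm {z : ℂ | |z.im| < π/2} := by
  intro z1 hz1 z2 hz2 heq
  have hre : ∀ z : ℂ, |z.im| < π/2 → 0 < (Complex.exp z).re := by
    intro z hz
    rw [Complex.exp_re]
    have hc : 0 < Real.cos z.im := Real.cos_pos_of_mem_Ioo (abs_lt.1 hz |> fun ⟨a,b⟩ => ⟨a,b⟩)
    positivity
  apply exp_injOn_strip hz1 hz2
  apply fm_injOn (hre z1 hz1) (hre z2 hz2)
  rw [fm_exp hz1, fm_exp hz2, heq]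
lemma exp_two_mul (x : ℝ) : Real.exp (2*x) = (Real.exp x)^2 := by
  rw [two_mul, Real.exp_add, sq]

lemma re_upper {z : ℂ} (him : |z.im| ≤ π/2) {C : ℝ} (hC : ‖gm z‖ ≤ C) :
    z.re ≤ max 1 (2*C + 4) := by
  rcases le_or_gt z.re 1 with h | h
  · exact le_trans h (le_max_left _ _)
  · refine le_trans ?_ (le_max_right _ _)
    have hx : (0:ℝ) ≤ z.re := by linarith
    have e3 : (z.re+1)^2 ≤ Real.exp (2*z.re) := by
      rw [exp_two_mul]
      exact pow_le_pow_left₀ (by linarith) (by linarith [Real.add_one_le_exp z.re]) 2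
    have n1 : ‖Complex.exp (2*z)‖ = Real.exp (2*z.re) := by
      rw [Complex.norm_exp]
      congr 1
      simp
    have t0 : (1 + Complex.exp (2*z))/2 = gm z - z := by unfold gm; ring
    have t1 : ‖(1 + Complex.exp (2*z))/2‖ ≤ ‖gm z‖ + ‖z‖ := by
      rw [t0]; exact norm_sub_le _ _
    have t2 : Real.exp (2*z.re) - 1 ≤ 2 * ‖(1 + Complex.exp (2*z))/2‖ := by
      have h1 : ‖Complex.exp (2*z)‖ ≤ ‖1 + Complex.exp (2*z)‖ + 1 := by
        calc ‖Complex.exp (2*z)‖ = ‖(1 + Complex.exp (2*z)) - 1‖ := by ring_nf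
          _ ≤ ‖1 + Complex.exp (2*z)‖ + ‖(1:ℂ)‖ := norm_sub_le _ _
          _ = ‖1 + Complex.exp (2*z)‖ + 1 := by simp
      have h2 : ‖(1 + Complex.exp (2*z))/2‖ = ‖1 + Complex.exp (2*z)‖/2 := by
        rw [norm_div]; simp
      rw [← n1]; rw [h2] at *; linarith
    have t3 : ‖z‖ ≤ z.re + 2 := by
      have := Complex.norm_le_abs_re_add_abs_im z
      have hπ := Real.pi_le_four
      rw [abs_of_nonneg hx] at this
      linarith
    nlinarith

lemma re_lower {z : ℂ} {C b : ℝ} (hC : ‖gm z‖ ≤ C) (hb : z.re ≤ b) :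
    -(C + (1 + Real.exp (2*b))/2) ≤ z.re := by
  have h1 : -C ≤ (gm z).re := by
    have := Complex.abs_re_le_norm (gm z)
    have := abs_le.1 (le_trans this hC)
    linarith [this.1]
  have h2 : Real.exp (2*z.re) * Real.cos (2*z.im) ≤ Real.exp (2*b) := by
    have hc := Real.cos_le_one (2*z.im)
    have he : Real.exp (2*z.re) ≤ Real.exp (2*b) := Real.exp_le_exp.2 (by linarith)
    nlinarith [Real.exp_pos (2*z.re)]
  rw [gm_re] at h1
  linarith
lemma S_open : IsOpen {z : ℂ | |z.im| < π/2} :=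
  isOpen_lt (continuous_abs.comp Complex.continuous_im) continuous_const

lemma S_convex : Convex ℝ {z : ℂ | |z.im| < π/2} := by
  have h : {z : ℂ | |z.im| < π/2} = Complex.imLm ⁻¹' (Set.Ioo (-(π/2)) (π/2)) := by
    ext z; simp [abs_lt, Complex.imLm]
  rw [h]
  exact (convex_Ioo _ _).linear_preimage _

lemma zero_mem_S : (0:ℂ) ∈ {z : ℂ | |z.im| < π/2} := by
  simp [Real.pi_pos]

lemma gm_image_open : IsOpen (gm '' {z : ℂ | |z.im| < π/2}) := by
  have han : AnalyticOnNhd ℂ gm {z : ℂ | |z.im| < π/2} :=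
    gm_diff.differentiableOn.analyticOnNhd S_open
  rcases han.is_constant_or_isOpen S_convex.isPreconnected with h | h
  · exfalso
    obtain ⟨w, hw⟩ := h
    have h0 := hw 0 zero_mem_S
    have h1 := hw 1 (by simp [Real.pi_pos])
    have : (gm 0).re ≠ (gm 1).re := by
      rw [gm_re, gm_re]
      simp
      nlinarith [Real.exp_pos (2:ℝ)]
    rw [h0, h1] at this
    exact this rfl
  · exact h _ (le_refl _) S_open

lemma box_compact (a b : ℝ) :
    IsCompact {z : ℂ | z.re ∈ Set.Icc a b ∧ z.im ∈ Set.Icc (-(π/2)) (π/2)} := by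
  apply Metric.isCompact_of_isClosed_isBounded
  · have : {z : ℂ | z.re ∈ Set.Icc a b ∧ z.im ∈ Set.Icc (-(π/2)) (π/2)}
        = (Complex.reCLM ⁻¹' Set.Icc a b) ∩ (Complex.imCLM ⁻¹' Set.Icc (-(π/2)) (π/2)) := by
      ext z; simp [Set.mem_Icc]
    rw [this]
    exact (isClosed_Icc.preimage Complex.reCLM.continuous).inter
      (isClosed_Icc.preimage Complex.imCLM.continuous)
  · rw [isBounded_iff_forall_norm_le]
    refine ⟨|a| + |b| + π, ?_⟩
    rintro z ⟨⟨h1, h2⟩, ⟨h3, h4⟩⟩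
    have := Complex.norm_le_abs_re_add_abs_im z
    have hre : |z.re| ≤ |a| + |b| := by
      rcases abs_cases a with ⟨_,_⟩|⟨_,_⟩ <;> rcases abs_cases b with ⟨_,_⟩|⟨_,_⟩ <;>
        rcases abs_cases z.re with ⟨e1,e2⟩|⟨e1,e2⟩ <;> linarith
    have him : |z.im| ≤ π := by
      have hπ := Real.pi_pos
      rcases abs_cases z.im with ⟨e1,e2⟩|⟨e1,e2⟩ <;> linarith
    linarith
lemma one_mem_D : (1:ℂ) ∈ {w : ℂ | ¬(w.re ≤ 0 ∧ |w.im| = π / 2)} := by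
  simp

lemma D_pathconn : IsPathConnected {w : ℂ | ¬(w.re ≤ 0 ∧ |w.im| = π / 2)} := by
  set D := {w : ℂ | ¬(w.re ≤ 0 ∧ |w.im| = π / 2)} with hD
  have hRHP : {z : ℂ | 0 < z.re} ⊆ D := by
    intro z hz
    simp only [hD, Set.mem_setOf_eq, not_and]
    intro h
    exact absurd hz (by simpa using h)
  refine ⟨1, one_mem_D, ?_⟩
  intro w hw
  set c : ℝ := |w.re| + 1 with hc
  set w' : ℂ := w + (c:ℂ) with hw'
  have hw're : 0 < w'.re := by
    simp only [hw', Complex.add_re, Complex.ofReal_re]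
    rcases abs_cases w.re with ⟨h1, _⟩ | ⟨h1, _⟩ <;> (rw [hc]; linarith)
  have seg1 : segment ℝ w w' ⊆ D := by
    intro x hx
    obtain ⟨a, b, ha, hb, hab, rfl⟩ := hx
    have hre : (a • w + b • w').re = w.re + b * c := by
      simp only [Complex.add_re, Complex.real_smul, Complex.mul_re, Complex.ofReal_re,
        Complex.ofReal_im, hw', Complex.add_re, Complex.ofReal_re]
      linear_combination w.re * hab
    have him : (a • w + b • w').im = w.im := by
      simp only [Complex.add_im, Complex.real_smul, Complex.mul_im, Complex.ofReal_re,
        Complex.ofReal_im, hw', Complex.add_im, Complex.ofReal_im]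
      linear_combination w.im * hab
    simp only [hD, Set.mem_setOf_eq, not_and]
    intro hle
    rw [him]
    intro habs
    have hwre : 0 < w.re := by
      by_contra hwre
      exact hw ⟨by linarith, habs⟩
    rw [hre] at hle
    have : 0 ≤ b * c := mul_nonneg hb (by positivity)
    linarith
  have j1 : JoinedIn D w w' :=
    (((convex_segment w w').isPathConnected ⟨w, left_mem_segment ℝ w w'⟩).joinedIn
      w (left_mem_segment ℝ w w') w' (right_mem_segment ℝ w w')).mono seg1
  have j2 : JoinedIn D w' 1 := by
    refine ((convex_halfSpace_re_gt (0:ℝ)).isPathConnected ⟨1, by simp⟩).joinedIn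
      w' hw're 1 (by simp) |>.mono hRHP
  exact (j1.trans j2).symm
lemma gm_boundary {z : ℂ} (hz : |z.im| = π/2) :
    (gm z).re ≤ 0 ∧ |(gm z).im| = π/2 := by
  have hcs : Real.sin (2*z.im) = 0 ∧ Real.cos (2*z.im) = -1 := by
    rcases abs_eq (by positivity : (0:ℝ) ≤ π/2) |>.1 hz with h | h <;> rw [h]
    · constructor
      · rw [show 2*(π/2) = π by ring, Real.sin_pi]
      · rw [show 2*(π/2) = π by ring, Real.cos_pi]
    · constructor
      · rw [show 2*(-(π/2)) = -π by ring, Real.sin_neg, Real.sin_pi, neg_zero]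
      · rw [show 2*(-(π/2)) = -π by ring, Real.cos_neg, Real.cos_pi]
  constructor
  · rw [gm_re, hcs.2]
    have := Real.add_one_le_exp (2*z.re)
    linarith
  · rw [gm_im, hcs.1]
    simpa using hz

lemma gm_closure {w : ℂ} (hw : w ∈ closure (gm '' {z : ℂ | |z.im| < π/2}))
    (hwD : w ∈ {w : ℂ | ¬(w.re ≤ 0 ∧ |w.im| = π / 2)}) :
    w ∈ gm '' {z : ℂ | |z.im| < π/2} := by
  obtain ⟨u, hu, hulim⟩ := mem_closure_iff_seq_limit.1 hw
  choose v hvS hveq using hu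
  set C : ℝ := ‖w‖ + 1 with hC
  set b : ℝ := max 1 (2*C + 4) with hb
  set a : ℝ := -(C + (1 + Real.exp (2*b))/2) with ha
  have hnorm : ∀ᶠ n in Filter.atTop, ‖u n‖ ≤ C := by
    have := hulim (Metric.closedBall_mem_nhds w zero_lt_one)
    filter_upwards [this] with n hn
    have hd : dist (u n) w ≤ 1 := by simpa using hn
    have hnw : ‖u n - w‖ ≤ 1 := by rwa [dist_eq_norm] at hd
    calc ‖u n‖ = ‖w + (u n - w)‖ := by ring_nf
      _ ≤ ‖w‖ + ‖u n - w‖ := norm_add_le _ _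
      _ ≤ C := by rw [hC]; linarith
  have hK : ∀ᶠ n in Filter.atTop,
      v n ∈ {z : ℂ | z.re ∈ Set.Icc a b ∧ z.im ∈ Set.Icc (-(π/2)) (π/2)} := by
    filter_upwards [hnorm] with n hn
    have hCn : ‖gm (v n)‖ ≤ C := by rw [hveq n]; exact hn
    have him : |(v n).im| ≤ π/2 := le_of_lt (hvS n)
    have h1 : (v n).re ≤ b := re_upper him hCn
    have h2 : a ≤ (v n).re := re_lower hCn h1
    exact ⟨⟨h2, h1⟩, abs_le.1 him⟩
  obtain ⟨z0, hz0K, φ, hφmono, hφlim⟩ := (box_compact a b).tendsto_subseq' hK.frequently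
  have h1 : Filter.Tendsto (fun n => gm (v (φ n))) Filter.atTop (nhds (gm z0)) :=
    (gm_diff.continuous.tendsto z0).comp hφlim
  have h2 : Filter.Tendsto (fun n => u (φ n)) Filter.atTop (nhds w) :=
    hulim.comp hφmono.tendsto_atTop
  have hgz0 : gm z0 = w := by
    apply tendsto_nhds_unique h1
    convert h2 using 2 with n
    exact hveq (φ n)
  rcases lt_or_eq_of_le (abs_le.2 hz0K.2 : |z0.im| ≤ π/2) with h | h
  · exact ⟨z0, h, hgz0⟩
  · exfalso
    have := gm_boundary h
    rw [hgz0] at this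
    exact hwD this

lemma gm_surjOn : Set.SurjOn gm {z : ℂ | |z.im| < π/2} {w : ℂ | ¬(w.re ≤ 0 ∧ |w.im| = π / 2)} := by
  set S := {z : ℂ | |z.im| < π/2}
  set D := {w : ℂ | ¬(w.re ≤ 0 ∧ |w.im| = π / 2)} with hD
  set E := gm '' S with hE
  intro w hw
  by_contra hwE
  have hUV : D ⊆ E ∪ (closure E)ᶜ := by
    intro x hx
    by_cases hc : x ∈ closure E
    · exact Or.inl (gm_closure hc hx)
    · exact Or.inr hc
  have h1E : (1:ℂ) ∈ E := ⟨0, zero_mem_S, by unfold gm; norm_num⟩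
  obtain ⟨x, hxD, hxE, hxV⟩ :=
    D_pathconn.isConnected.isPreconnected E (closure E)ᶜ gm_image_open
      (isClosed_closure.isOpen_compl) hUV ⟨1, one_mem_D, h1E⟩
      ⟨w, hw, fun hc => hwE (gm_closure hc hw)⟩
  exact hxV (subset_closure hxE)

theorem stmt8 :
    Differentiable ℂ (fun z : ℂ => z + (1 + Complex.exp (2 * z)) / 2) ∧
    Set.BijOn (fun z : ℂ => z + (1 + Complex.exp (2 * z)) / 2)
      {z : ℂ | |z.im| < π / 2}
      {w : ℂ | ¬(w.re ≤ 0 ∧ |w.im| = π / 2)} := by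
  refine ⟨gm_diff, fun z hz => gm_maps hz, gm_injOn, gm_surjOn⟩
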